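/- Suppose T = T(u) satisfies ln T = n u²/2 + (n - 2/α) ln u + C for a constant C, with n ≥ 1, α ∈ (0,2]. Then as T → ∞, u² = (2/n) ln T + ((2/(nα)) - 1) ln ln T + C' (1 + o(1)) for an explicit constant C' = ln((n/2)^{1 - 2/(nα)} e^{-2C/n}). -/

import Mathlib

open Real Filter

theorem u_sq_asymptotic (n : ℕ) (hn : 1 ≤ n) (α : ℝ) (hα : α ∈ Set.Ioc (0:ℝ) 2)
    (C : ℝ) (T : ℝ → ℝ)
    (hT : ∀ u : ℝ, 1 ≤ u →
      log (T u) = n * u ^ 2 / 2 + ((n : ℝ) - 2 / α) * log u + C) :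
    Tendsto (fun u : ℝ =>
        u ^ 2 - ((2 / (n : ℝ)) * log (T u)
          + (2 / ((n : ℝ) * α) - 1) * log (log (T u))))
      atTop
      (nhds (log (((n : ℝ) / 2) ^ ((1:ℝ) - 2 / ((n : ℝ) * α)) * exp (-2 * C / n)))) := by
  obtain ⟨hα0, hα2⟩ := hα
  have hN : (0:ℝ) < (n:ℝ) := by exact_mod_cast hn
  set N : ℝ := (n:ℝ) with hNdef
  set c : ℝ := N - 2/α with hcdef
  set g : ℝ → ℝ := fun u => ((c * log u + C) / u ^ 2) * (2 / N) with hgdef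
  set tgt : ℝ := (1 - 2/(N*α)) * log (N/2) - 2*C/N with htgt
  -- log u / u^2 → 0
  have hlog : Tendsto (fun u : ℝ => log u / u ^ 2) atTop (nhds 0) := by
    have h1 : (fun u : ℝ => log u) =o[atTop] (fun u : ℝ => u ^ 2) := by
      refine Real.isLittleO_log_id_atTop.trans_isBigO (Asymptotics.IsBigO.of_bound 1 ?_)
      filter_upwards [eventually_ge_atTop (1:ℝ)] with u hu
      have h0 : (0:ℝ) ≤ u := by linarith
      simp only [id, norm_eq_abs, abs_of_nonneg h0, abs_of_nonneg (by positivity : (0:ℝ) ≤ u^2),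
        one_mul]
      nlinarith
    exact h1.tendsto_div_nhds_zero
  have hinv : Tendsto (fun u : ℝ => C / u ^ 2) atTop (nhds 0) :=
    tendsto_const_nhds.div_atTop (tendsto_pow_atTop two_ne_zero)
  have hg0 : Tendsto g atTop (nhds 0) := by
    have hge : g = fun u => (c * (log u / u^2) + C / u^2) * (2/N) := by
      funext u; simp only [hgdef]; ring
    rw [hge]
    simpa using ((hlog.const_mul c).add hinv).mul_const (2/N)
  -- eventual equality
  have hev : (fun u : ℝ => u ^ 2 - ((2 / N) * log (T u)
        + (2 / (N * α) - 1) * log (log (T u))))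
      =ᶠ[atTop] (fun u : ℝ => tgt + (1 - 2/(N*α)) * log (1 + g u)) := by
    filter_upwards [eventually_ge_atTop (1:ℝ),
      hg0.eventually (eventually_gt_nhds (by norm_num : (-1:ℝ) < 0))] with u hu1 hgu
    have hu0 : (0:ℝ) < u := lt_of_lt_of_le zero_lt_one hu1
    have hgu' : (0:ℝ) < 1 + g u := by linarith
    have hL : log (T u) = (N/2) * u^2 * (1 + g u) := by
      rw [hT u hu1]
      simp only [hgdef, ← hNdef, ← hcdef]
      field_simp
      ring
    have h2 : log (log (T u)) = log (N/2) + 2 * log u + log (1 + g u) := by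
      rw [hL, Real.log_mul (by positivity) (ne_of_gt hgu'),
        Real.log_mul (by positivity) (by positivity), Real.log_pow]
      push_cast; ring
    rw [h2, hT u hu1, htgt]
    generalize log (1 + g u) = A
    simp only [hcdef]
    field_simp
    ring
  have hlim : Tendsto (fun u : ℝ => tgt + (1 - 2/(N*α)) * log (1 + g u)) atTop (nhds tgt) := by
    have h1g : Tendsto (fun u : ℝ => 1 + g u) atTop (nhds 1) := by
      simpa using tendsto_const_nhds.add hg0
    have hlog1 : Tendsto (fun u : ℝ => log (1 + g u)) atTop (nhds 0) := by
      have := (Real.continuousAt_log one_ne_zero).tendsto.comp h1g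
      simpa [Function.comp_def] using this
    simpa using tendsto_const_nhds.add (hlog1.const_mul (1 - 2/(N*α)))
  have htgteq : log ((N / 2) ^ ((1:ℝ) - 2 / (N * α)) * exp (-2 * C / N)) = tgt := by
    rw [Real.log_mul (ne_of_gt (Real.rpow_pos_of_pos (by positivity) _)) (Real.exp_ne_zero _),
      Real.log_rpow (by positivity), Real.log_exp, htgt]
    ring
  rw [htgteq]
  exact hlim.congr' hev.symm
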